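/- arXiv:1511.04818 — 4 statements merged into one kernel-verified Lean document; each statement's English description precedes it below -/
import Mathlib

section
/- Let N be a positive integer, x = (x_0,…,x_{N−1}) ∈ ℂ^N a unit vector, and k ∈ {0,…,N−1} such that the DFT coefficient y_k is real. In ℂ^N ⊕ ℂ^N define the unit vectors φ_k = (u, w) with u_j = (1/√2)·x_j·e^{2πi jk/N} and w_j = 1/√(2N), and φ^± = (±w, w). Then |⟨φ^+, φ_k⟩|² = (y_k² + 1)/4 + y_k/2 and |⟨φ^−, φ_k⟩|² = (y_k² + 1)/4 − y_k/2. -/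
open Complex

/-- With `φ_k = (u, w)`, `φ^± = (±w, w)` in `ℂ^N ⊕ ℂ^N` as in the QFTC algorithm, and the
DFT coefficient `y_k` real, `|⟨φ^±, φ_k⟩|² = (y_k² + 1)/4 ± y_k/2`. -/
theorem qftc_overlap (N : ℕ) (hN : 0 < N) (x : Fin N → ℂ)
    (hx : ∑ j : Fin N, ‖x j‖ ^ 2 = 1) (k : Fin N)
    (y : ℂ)
    (hy : y = (1 / (Real.sqrt N : ℂ)) *
      ∑ j : Fin N,
        Complex.exp (2 * Real.pi * Complex.I * (j.val : ℂ) * (k.val : ℂ) / (N : ℂ)) * x j)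
    (hreal : y.im = 0)
    (u w : Fin N → ℂ)
    (hu : ∀ j : Fin N, u j = (1 / (Real.sqrt 2 : ℂ)) * x j *
      Complex.exp (2 * Real.pi * Complex.I * (j.val : ℂ) * (k.val : ℂ) / (N : ℂ)))
    (hw : ∀ j : Fin N, w j = (1 / (Real.sqrt (2 * N)) : ℂ)) :
    ‖((∑ j : Fin N, (starRingEnd ℂ) (w j) * u j)
        + ∑ j : Fin N, (starRingEnd ℂ) (w j) * w j)‖ ^ 2
      = (y.re ^ 2 + 1) / 4 + y.re / 2 ∧
    ‖((∑ j : Fin N, (starRingEnd ℂ) (-(w j)) * u j)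
        + ∑ j : Fin N, (starRingEnd ℂ) (w j) * w j)‖ ^ 2
      = (y.re ^ 2 + 1) / 4 - y.re / 2 := by
  have hNc : (N : ℂ) ≠ 0 := Nat.cast_ne_zero.mpr hN.ne'
  have hsqrt : (Real.sqrt (2 * N) : ℝ) * Real.sqrt 2 = 2 * Real.sqrt N := by
    rw [Real.sqrt_mul (by norm_num : (2:ℝ) ≥ 0)]
    rw [mul_comm (Real.sqrt 2) (Real.sqrt N), mul_assoc, Real.mul_self_sqrt (by norm_num)]
    ring
  -- ∑ conj(w j) * u j = y / 2
  have hA : (∑ j : Fin N, (starRingEnd ℂ) (w j) * u j) = y / 2 := by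
    have : ∀ j : Fin N, (starRingEnd ℂ) (w j) * u j
        = (1 / (2 * (Real.sqrt N : ℂ))) *
          (Complex.exp (2 * Real.pi * Complex.I * (j.val : ℂ) * (k.val : ℂ) / (N : ℂ)) * x j) := by
      intro j
      rw [hw j, hu j]
      rw [show ((starRingEnd ℂ) ((1 / (Real.sqrt (2 * N)) : ℂ))) = ((1 / (Real.sqrt (2 * N)) : ℂ)) by
        simp [Complex.conj_ofReal]]
      have h2 : ((Real.sqrt (2 * N) : ℂ)) * (Real.sqrt 2 : ℂ) = 2 * (Real.sqrt N : ℂ) := by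
        rw [← Complex.ofReal_mul, hsqrt]; push_cast; ring
      calc (1 / ((Real.sqrt (2 * N) : ℝ) : ℂ)) *
            ((1 / ((Real.sqrt 2 : ℝ) : ℂ)) * x j *
              Complex.exp (2 * Real.pi * Complex.I * (j.val : ℂ) * (k.val : ℂ) / (N : ℂ)))
          = 1 / (((Real.sqrt (2 * N) : ℝ) : ℂ) * ((Real.sqrt 2 : ℝ) : ℂ)) *
            (Complex.exp (2 * Real.pi * Complex.I * (j.val : ℂ) * (k.val : ℂ) / (N : ℂ)) * x j) := by
            ring
        _ = _ := by rw [h2]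
    rw [Finset.sum_congr rfl (fun j _ => this j), ← Finset.mul_sum, hy]
    field_simp
    rw [mul_comm]
    congr 1
    refine Finset.sum_congr rfl (fun j _ => ?_)
    ring_nf
  have hB : (∑ j : Fin N, (starRingEnd ℂ) (w j) * w j) = 1 / 2 := by
    have hterm : ∀ j : Fin N, (starRingEnd ℂ) (w j) * w j = 1 / (2 * (N : ℂ)) := by
      intro j
      rw [hw j]
      rw [show ((starRingEnd ℂ) ((1 / (Real.sqrt (2 * N)) : ℂ))) = ((1 / (Real.sqrt (2 * N)) : ℂ)) by
        simp [Complex.conj_ofReal]]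
      have : ((Real.sqrt (2 * N) : ℂ)) * ((Real.sqrt (2 * N) : ℂ)) = 2 * (N : ℂ) := by
        rw [← Complex.ofReal_mul, Real.mul_self_sqrt (by positivity)]
        push_cast; ring
      rw [div_mul_div_comm, this, one_mul]
    rw [Finset.sum_congr rfl (fun j _ => hterm j), Finset.sum_const, Finset.card_univ,
      Fintype.card_fin, nsmul_eq_mul]
    field_simp
  have hA' : (∑ j : Fin N, (starRingEnd ℂ) (-(w j)) * u j) = -(y / 2) := by
    simp only [map_neg, neg_mul]
    rw [Finset.sum_neg_distrib, hA]
  have hyre : y = ((y.re : ℝ) : ℂ) := by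
    rw [← Complex.re_add_im y, hreal]; simp
  constructor
  · rw [hA, hB, hyre]
    rw [show ((y.re : ℝ) : ℂ) / 2 + 1 / 2 = (((y.re + 1) / 2 : ℝ) : ℂ) by push_cast; ring]
    rw [Complex.norm_real, Real.norm_eq_abs, _root_.sq_abs]
    simp only [Complex.ofReal_re]
    ring
  · rw [hA', hB, hyre]
    rw [show -(((y.re : ℝ) : ℂ) / 2) + 1 / 2 = (((1 - y.re) / 2 : ℝ) : ℂ) by push_cast; ring]
    rw [Complex.norm_real, Real.norm_eq_abs, _root_.sq_abs]
    simp only [Complex.ofReal_re]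
    ring
end

section
/- Let N be a positive integer, x = (x_0,…,x_{N−1}) ∈ ℂ^N a unit vector, and k ∈ {0,…,N−1} such that the DFT coefficient y_k is real. In ℂ^N ⊕ ℂ^N define φ_k = (u, w) with u_j = (1/√2)·x_j·e^{2πi jk/N} and w_j = 1/√(2N), and φ^± = (±w, w). Then |⟨φ^+, φ_k⟩|² − |⟨φ^−, φ_k⟩|² = y_k. -/
open Complex

/-- With `φ_k = (u, w)`, `φ^± = (±w, w)` in `ℂ^N ⊕ ℂ^N` as in the QFTC algorithm, and the
DFT coefficient `y_k` real, `|⟨φ^+, φ_k⟩|² − |⟨φ^-, φ_k⟩|² = y_k`. -/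
theorem qftc_overlap_difference (N : ℕ) (hN : 0 < N) (x : Fin N → ℂ)
    (hx : ∑ j : Fin N, ‖x j‖ ^ 2 = 1) (k : Fin N)
    (y : ℂ)
    (hy : y = (1 / (Real.sqrt N : ℂ)) *
      ∑ j : Fin N,
        Complex.exp (2 * Real.pi * Complex.I * (j.val : ℂ) * (k.val : ℂ) / (N : ℂ)) * x j)
    (hreal : y.im = 0)
    (u w : Fin N → ℂ)
    (hu : ∀ j : Fin N, u j = (1 / (Real.sqrt 2 : ℂ)) * x j *
      Complex.exp (2 * Real.pi * Complex.I * (j.val : ℂ) * (k.val : ℂ) / (N : ℂ)))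
    (hw : ∀ j : Fin N, w j = (1 / (Real.sqrt (2 * N)) : ℂ)) :
    ‖(∑ j : Fin N, (starRingEnd ℂ) (w j) * u j)
        + ∑ j : Fin N, (starRingEnd ℂ) (w j) * w j‖ ^ 2
      - ‖(∑ j : Fin N, (starRingEnd ℂ) (-(w j)) * u j)
        + ∑ j : Fin N, (starRingEnd ℂ) (w j) * w j‖ ^ 2
      = y.re := by
  have hNR : (0:ℝ) < (N:ℝ) := by exact_mod_cast hN
  have hN' : (Real.sqrt N : ℝ) ≠ 0 := ne_of_gt (Real.sqrt_pos.mpr hNR)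
  have h2 : (Real.sqrt 2 : ℝ) ≠ 0 := by positivity
  have h2N : Real.sqrt (2*N) = Real.sqrt 2 * Real.sqrt N := Real.sqrt_mul (by norm_num) _
  have hs2 : ((Real.sqrt 2 : ℝ):ℂ) * ((Real.sqrt 2 : ℝ):ℂ) = 2 := by
    norm_cast
    exact Real.mul_self_sqrt (by norm_num)
  have hccR : (1/(Real.sqrt (2*N) : ℝ)) * (1/(Real.sqrt 2 : ℝ)) =
      1/2 * (1/(Real.sqrt N : ℝ)) := by
    rw [h2N]
    have h22 : Real.sqrt 2 * Real.sqrt 2 = 2 := Real.mul_self_sqrt (by norm_num)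
    field_simp
    nlinarith [h22, Real.sqrt_nonneg (N:ℝ), Real.sqrt_nonneg 2]
  have hcc : (1/((Real.sqrt (2*N) : ℝ):ℂ)) * (1/((Real.sqrt 2 : ℝ):ℂ)) =
      1/2 * (1/((Real.sqrt N : ℝ):ℂ)) := by
    have h := congrArg (fun r : ℝ => (r : ℂ)) hccR
    push_cast at h
    exact h
  have hS : (∑ j : Fin N, (starRingEnd ℂ) (w j) * u j) = y / 2 := by
    rw [hy]
    calc ∑ j : Fin N, (starRingEnd ℂ) (w j) * u j
        = ∑ j : Fin N, (1/2 * (1/((Real.sqrt N : ℝ):ℂ))) *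
            (Complex.exp (2 * Real.pi * Complex.I * (j.val : ℂ) * (k.val : ℂ) / (N : ℂ)) * x j) := by
          refine Finset.sum_congr rfl fun j _ => ?_
          rw [hu, hw, map_div₀, map_one, Complex.conj_ofReal, ← hcc]
          ring
      _ = (1/2 * (1/((Real.sqrt N : ℝ):ℂ))) *
            ∑ j : Fin N, Complex.exp (2 * Real.pi * Complex.I * (j.val : ℂ) * (k.val : ℂ) / (N : ℂ)) * x j := by
          rw [Finset.mul_sum]
      _ = (1 / ((Real.sqrt N : ℝ):ℂ) *
            ∑ j : Fin N, Complex.exp (2 * Real.pi * Complex.I * (j.val : ℂ) * (k.val : ℂ) / (N : ℂ)) * x j) / 2 := by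
          ring
  have hs2N : ((Real.sqrt (2*N) : ℝ):ℂ) * ((Real.sqrt (2*N) : ℝ):ℂ) = 2 * N := by
    norm_cast
    exact Real.mul_self_sqrt (by positivity)
  have hT : (∑ j : Fin N, (starRingEnd ℂ) (w j) * w j) = 1 / 2 := by
    simp only [hw, map_div₀, map_one, Complex.conj_ofReal]
    rw [Finset.sum_const, Finset.card_univ, Fintype.card_fin, nsmul_eq_mul]
    rw [div_mul_div_comm, one_mul, hs2N]
    have hNC : (N:ℂ) ≠ 0 := by exact_mod_cast hN.ne'
    field_simp
  have hSneg : (∑ j : Fin N, (starRingEnd ℂ) (-(w j)) * u j) = -(y / 2) := by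
    rw [← hS]
    simp [neg_mul]
  rw [hS, hT, hSneg]
  set a := y.re with ha
  have hyc : y = (a:ℂ) := by
    apply Complex.ext
    · simp [ha]
    · simp [hreal]
  rw [hyc]
  have e1 : (a:ℂ)/2 + 1/2 = ((a/2 + 1/2 : ℝ):ℂ) := by push_cast; ring
  have e2 : -((a:ℂ)/2) + 1/2 = ((-(a/2) + 1/2 : ℝ):ℂ) := by push_cast; ring
  rw [e1, e2, Complex.norm_real, Complex.norm_real, Real.norm_eq_abs, Real.norm_eq_abs, _root_.sq_abs, _root_.sq_abs]
  ring
end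

section
/- Let H be a complex inner product space, let ψ₀, ψ₁ ∈ H be orthogonal unit vectors, let θ ∈ ℝ, and set ψ = sin(θ)·ψ₀ + cos(θ)·ψ₁. Define the reflections R_ψ(v) = v − 2⟨ψ, v⟩ψ and R₀(v) = v − 2⟨ψ₀, v⟩ψ₀, and the Grover-type operator Q = −R_ψ ∘ R₀. Then for every natural number ℓ, Q^ℓ(ψ) = sin((2ℓ+1)θ)·ψ₀ + cos((2ℓ+1)θ)·ψ₁. -/
open Complex

lemma grover_step {H : Type*} [NormedAddCommGroup H] [InnerProductSpace ℂ H]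
    (ψ₀ ψ₁ : H) (h0 : ‖ψ₀‖ = 1) (h1 : ‖ψ₁‖ = 1)
    (horth : (inner ℂ ψ₀ ψ₁ : ℂ) = 0)
    (θ : ℝ) (ψ : H)
    (hψ : ψ = (Real.sin θ : ℂ) • ψ₀ + (Real.cos θ : ℂ) • ψ₁)
    (Rψ R₀ Q : H → H)
    (hRψ : ∀ v : H, Rψ v = v - ((2 : ℂ) * (inner ℂ ψ v : ℂ)) • ψ)
    (hR₀ : ∀ v : H, R₀ v = v - ((2 : ℂ) * (inner ℂ ψ₀ v : ℂ)) • ψ₀)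
    (hQ : ∀ v : H, Q v = -(Rψ (R₀ v)))
    (α : ℝ) :
    Q ((Real.sin α : ℂ) • ψ₀ + (Real.cos α : ℂ) • ψ₁)
      = (Real.sin (α + 2 * θ) : ℂ) • ψ₀ + (Real.cos (α + 2 * θ) : ℂ) • ψ₁ := by
  have h00 : (inner ℂ ψ₀ ψ₀ : ℂ) = 1 := by
    rw [inner_self_eq_norm_sq_to_K, h0]; norm_num
  have h11 : (inner ℂ ψ₁ ψ₁ : ℂ) = 1 := by
    rw [inner_self_eq_norm_sq_to_K, h1]; norm_num
  have h10 : (inner ℂ ψ₁ ψ₀ : ℂ) = 0 := by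
    rw [← inner_conj_symm, horth, map_zero]
  rw [hQ, hR₀, hRψ, hψ]
  simp only [inner_add_right, inner_smul_right, inner_sub_right, inner_add_left,
    inner_smul_left, Complex.conj_ofReal, h00, h11, h10, horth,
    mul_one, mul_zero, add_zero, zero_add, smul_sub, smul_add, smul_smul]
  have pyth : Complex.sin θ ^ 2 + Complex.cos θ ^ 2 = 1 := Complex.sin_sq_add_cos_sq θ
  match_scalars
  · rw [Complex.sin_add, Complex.cos_two_mul, Complex.sin_two_mul]
    linear_combination (-2 * Complex.sin (α : ℂ)) * pyth
  · rw [Complex.cos_add, Complex.cos_two_mul, Complex.sin_two_mul]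
    linear_combination (2 * Complex.cos (α : ℂ)) * pyth - (2 * Complex.cos (α : ℂ)) * pyth

/-- Grover-type rotation: with `ψ = sin θ • ψ₀ + cos θ • ψ₁` for orthogonal unit vectors
`ψ₀, ψ₁` and `Q = -R_ψ ∘ R₀`, we have `Q^ℓ ψ = sin((2ℓ+1)θ) • ψ₀ + cos((2ℓ+1)θ) • ψ₁`. -/
theorem grover_iterate {H : Type*} [NormedAddCommGroup H] [InnerProductSpace ℂ H]
    (ψ₀ ψ₁ : H) (h0 : ‖ψ₀‖ = 1) (h1 : ‖ψ₁‖ = 1)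
    (horth : (inner ℂ ψ₀ ψ₁ : ℂ) = 0)
    (θ : ℝ) (ψ : H)
    (hψ : ψ = (Real.sin θ : ℂ) • ψ₀ + (Real.cos θ : ℂ) • ψ₁)
    (Rψ R₀ Q : H → H)
    (hRψ : ∀ v : H, Rψ v = v - ((2 : ℂ) * (inner ℂ ψ v : ℂ)) • ψ)
    (hR₀ : ∀ v : H, R₀ v = v - ((2 : ℂ) * (inner ℂ ψ₀ v : ℂ)) • ψ₀)
    (hQ : ∀ v : H, Q v = -(Rψ (R₀ v)))
    (ℓ : ℕ) :
    Q^[ℓ] ψ = (Real.sin ((2 * ℓ + 1) * θ) : ℂ) • ψ₀ + (Real.cos ((2 * ℓ + 1) * θ) : ℂ) • ψ₁ := by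
  induction ℓ with
  | zero => simp [hψ]
  | succ n ih =>
    rw [Function.iterate_succ_apply', ih,
      grover_step ψ₀ ψ₁ h0 h1 horth θ ψ hψ Rψ R₀ Q hRψ hR₀ hQ]
    have : (2 * (n : ℝ) + 1) * θ + 2 * θ = (2 * (↑(n + 1) : ℝ) + 1) * θ := by
      push_cast; ring
    rw [this]
end

section
/- Let H be a complex inner product space, let ψ₀, ψ₁ ∈ H be orthogonal unit vectors, let θ ∈ ℝ, and set ψ = sin(θ)·ψ₀ + cos(θ)·ψ₁. Define the reflections R_ψ(v) = v − 2⟨ψ, v⟩ψ and R₀(v) = v − 2⟨ψ₀, v⟩ψ₀, and Q = −R_ψ ∘ R₀. Then Q(ψ₀ + i·ψ₁) = e^{2iθ}·(ψ₀ + i·ψ₁) and Q(ψ₀ − i·ψ₁) = e^{−2iθ}·(ψ₀ − i·ψ₁); that is, Q has eigenvalues e^{±2iθ} on the span of {ψ₀, ψ₁}. -/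
open Complex

/-- The Grover-type operator `Q = -R_ψ ∘ R₀` has eigenvalues `e^{±2iθ}` on the span of
`{ψ₀, ψ₁}`, with eigenvectors `ψ₀ ± i ψ₁`. -/
theorem grover_eigenvalues {H : Type*} [NormedAddCommGroup H] [InnerProductSpace ℂ H]
    (ψ₀ ψ₁ : H) (h0 : ‖ψ₀‖ = 1) (h1 : ‖ψ₁‖ = 1)
    (horth : (inner ℂ ψ₀ ψ₁ : ℂ) = 0)
    (θ : ℝ) (ψ : H)
    (hψ : ψ = (Real.sin θ : ℂ) • ψ₀ + (Real.cos θ : ℂ) • ψ₁)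
    (Rψ R₀ Q : H → H)
    (hRψ : ∀ v : H, Rψ v = v - ((2 : ℂ) * (inner ℂ ψ v : ℂ)) • ψ)
    (hR₀ : ∀ v : H, R₀ v = v - ((2 : ℂ) * (inner ℂ ψ₀ v : ℂ)) • ψ₀)
    (hQ : ∀ v : H, Q v = -(Rψ (R₀ v))) :
    Q (ψ₀ + Complex.I • ψ₁)
        = Complex.exp (2 * Complex.I * (θ : ℂ)) • (ψ₀ + Complex.I • ψ₁) ∧
    Q (ψ₀ - Complex.I • ψ₁)
        = Complex.exp (-(2 * Complex.I * (θ : ℂ))) • (ψ₀ - Complex.I • ψ₁) := by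
  have h00 : (inner ℂ ψ₀ ψ₀ : ℂ) = 1 := by
    rw [inner_self_eq_norm_sq_to_K, h0]; norm_num
  have h11 : (inner ℂ ψ₁ ψ₁ : ℂ) = 1 := by
    rw [inner_self_eq_norm_sq_to_K, h1]; norm_num
  have h10 : (inner ℂ ψ₁ ψ₀ : ℂ) = 0 := by
    rw [← inner_conj_symm, horth]; simp
  have hpyth : ((Real.sin θ : ℂ))^2 + ((Real.cos θ : ℂ))^2 = 1 := by
    norm_cast; exact Real.sin_sq_add_cos_sq θ
  have hexp : Complex.exp (2 * Complex.I * (θ : ℂ))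
      = ((Real.cos θ : ℂ)^2 - (Real.sin θ : ℂ)^2)
        + Complex.I * (2 * (Real.sin θ : ℂ) * (Real.cos θ : ℂ)) := by
    have : (2 : ℂ) * Complex.I * θ = (2*θ : ℂ) * Complex.I := by ring
    rw [this, Complex.exp_mul_I, Complex.cos_two_mul', Complex.sin_two_mul]
    push_cast
    ring
  have hexp' : Complex.exp (-(2 * Complex.I * (θ : ℂ)))
      = ((Real.cos θ : ℂ)^2 - (Real.sin θ : ℂ)^2)
        - Complex.I * (2 * (Real.sin θ : ℂ) * (Real.cos θ : ℂ)) := by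
    have : -((2 : ℂ) * Complex.I * θ) = (-(2*θ) : ℂ) * Complex.I := by ring
    rw [this, Complex.exp_mul_I, Complex.cos_neg, Complex.sin_neg,
      Complex.cos_two_mul', Complex.sin_two_mul]
    push_cast
    ring
  constructor
  · rw [hQ, hR₀, hRψ, hψ]
    simp only [inner_add_right, inner_sub_right, inner_smul_right, inner_smul_left,
      inner_add_left, inner_smul_left, h00, h11, h10, horth, hexp, Complex.conj_ofReal,
      map_mul]
    simp only [smul_add, smul_sub, smul_smul, neg_sub, sub_smul, add_smul]
    match_scalars <;> (push_cast; first
      | ring1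
      | linear_combination Complex.sin_sq_add_cos_sq (θ:ℂ)
      | linear_combination -Complex.sin_sq_add_cos_sq (θ:ℂ)
      | linear_combination 2*Complex.sin_sq_add_cos_sq (θ:ℂ)
      | linear_combination -2*Complex.sin_sq_add_cos_sq (θ:ℂ)
      | linear_combination (Complex.I-1)*Complex.sin_sq_add_cos_sq (θ:ℂ)
      | linear_combination (1-Complex.I)*Complex.sin_sq_add_cos_sq (θ:ℂ)
      | linear_combination (Complex.I+1)*Complex.sin_sq_add_cos_sq (θ:ℂ)
      | linear_combination (-Complex.I-1)*Complex.sin_sq_add_cos_sq (θ:ℂ)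
      | linear_combination Complex.I*Complex.sin_sq_add_cos_sq (θ:ℂ)
      | linear_combination -Complex.I*Complex.sin_sq_add_cos_sq (θ:ℂ)
      | linear_combination Complex.I*Complex.sin_sq_add_cos_sq (θ:ℂ) - 2*Complex.sin (θ:ℂ)*Complex.cos (θ:ℂ)*Complex.I_sq
      | linear_combination -Complex.I*Complex.sin_sq_add_cos_sq (θ:ℂ) - 2*Complex.sin (θ:ℂ)*Complex.cos (θ:ℂ)*Complex.I_sq
      | linear_combination 2*Complex.I*Complex.sin_sq_add_cos_sq (θ:ℂ) - 2*Complex.sin (θ:ℂ)*Complex.cos (θ:ℂ)*Complex.I_sq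
      | linear_combination -2*Complex.I*Complex.sin_sq_add_cos_sq (θ:ℂ) - 2*Complex.sin (θ:ℂ)*Complex.cos (θ:ℂ)*Complex.I_sq
      | linear_combination (-2:ℂ)*Complex.sin (θ:ℂ)*Complex.cos (θ:ℂ)*Complex.I_sq
      | linear_combination (2:ℂ)*Complex.sin (θ:ℂ)*Complex.cos (θ:ℂ)*Complex.I_sq)
  · rw [hQ, hR₀, hRψ, hψ]
    simp only [inner_add_right, inner_sub_right, inner_smul_right, inner_smul_left,
      inner_add_left, inner_smul_left, h00, h11, h10, horth, hexp', Complex.conj_ofReal,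
      map_mul, inner_neg_right, inner_sub_left]
    simp only [smul_add, smul_sub, smul_smul, neg_sub, sub_smul, add_smul]
    match_scalars <;> (push_cast; first
      | ring1
      | linear_combination Complex.sin_sq_add_cos_sq (θ:ℂ)
      | linear_combination -Complex.sin_sq_add_cos_sq (θ:ℂ)
      | linear_combination 2*Complex.sin_sq_add_cos_sq (θ:ℂ)
      | linear_combination -2*Complex.sin_sq_add_cos_sq (θ:ℂ)
      | linear_combination (Complex.I-1)*Complex.sin_sq_add_cos_sq (θ:ℂ)
      | linear_combination (1-Complex.I)*Complex.sin_sq_add_cos_sq (θ:ℂ)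
      | linear_combination (Complex.I+1)*Complex.sin_sq_add_cos_sq (θ:ℂ)
      | linear_combination (-Complex.I-1)*Complex.sin_sq_add_cos_sq (θ:ℂ)
      | linear_combination Complex.I*Complex.sin_sq_add_cos_sq (θ:ℂ)
      | linear_combination -Complex.I*Complex.sin_sq_add_cos_sq (θ:ℂ)
      | linear_combination Complex.I*Complex.sin_sq_add_cos_sq (θ:ℂ) - 2*Complex.sin (θ:ℂ)*Complex.cos (θ:ℂ)*Complex.I_sq
      | linear_combination -Complex.I*Complex.sin_sq_add_cos_sq (θ:ℂ) - 2*Complex.sin (θ:ℂ)*Complex.cos (θ:ℂ)*Complex.I_sq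
      | linear_combination 2*Complex.I*Complex.sin_sq_add_cos_sq (θ:ℂ) - 2*Complex.sin (θ:ℂ)*Complex.cos (θ:ℂ)*Complex.I_sq
      | linear_combination -2*Complex.I*Complex.sin_sq_add_cos_sq (θ:ℂ) - 2*Complex.sin (θ:ℂ)*Complex.cos (θ:ℂ)*Complex.I_sq
      | linear_combination (-2:ℂ)*Complex.sin (θ:ℂ)*Complex.cos (θ:ℂ)*Complex.I_sq
      | linear_combination (2:ℂ)*Complex.sin (θ:ℂ)*Complex.cos (θ:ℂ)*Complex.I_sq)
end
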